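/- Let C be a right Hopf-Galois co-object over a Hopf algebra H with cotranslation map τ. Then Δ(τ(a⊗b)) = Σ τ(a₂⊗b₁) ⊗ τ(a₁⊗b₂) for all a,b ∈ C. -/

import Mathlib

open Coalgebra TensorProduct

universe u v w

/-- The canonical map `C ⊗ H → C ⊗ C`, `c ⊗ h ↦ Σ c₁ ⊗ c₂·h`, for a right action
`act` of `H` on `C`. -/
noncomputable def canMap {F : Type u} {C : Type v} {H : Type w} [Field F]
    [AddCommGroup C] [Module F C] [Coalgebra F C] [AddCommGroup H] [Module F H]
    (act : C →ₗ[F] H →ₗ[F] C) : C ⊗[F] H →ₗ[F] C ⊗[F] C :=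
  (LinearMap.lTensor C (TensorProduct.lift act)) ∘ₗ
    (TensorProduct.assoc F C C H).toLinearMap ∘ₗ
    (LinearMap.rTensor H (comul (R := F)))

/-- The cotranslation map `τ = (ε ⊗ id) ∘ can⁻¹ : C ⊗ C → H`, where `inv` is the
inverse of the canonical map. -/
noncomputable def cotr {F : Type u} {C : Type v} {H : Type w} [Field F]
    [AddCommGroup C] [Module F C] [Coalgebra F C] [AddCommGroup H] [Module F H]
    (inv : C ⊗[F] C →ₗ[F] C ⊗[F] H) : C ⊗[F] C →ₗ[F] H :=
  (TensorProduct.lid F H).toLinearMap ∘ₗ (LinearMap.rTensor H (counit (R := F))) ∘ₗ inv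


section aux

variable {F : Type u} {C : Type v} {H : Type w} [Field F]
    [AddCommGroup C] [Module F C] [Coalgebra F C] [AddCommGroup H] [Module F H]

/-- the map `a ⊗ b ↦ Σ f(a₂ ⊗ b₁) ⊗ f(a₁ ⊗ b₂)`. -/
noncomputable def Tmap (f : C ⊗[F] C →ₗ[F] H) : C ⊗[F] C →ₗ[F] H ⊗[F] H :=
  (TensorProduct.map f f) ∘ₗ
    (TensorProduct.tensorTensorTensorComm F C C C C).toLinearMap ∘ₗ
    (LinearMap.rTensor (C ⊗[F] C) (TensorProduct.comm F C C).toLinearMap) ∘ₗ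
    (TensorProduct.map (comul (R := F)) (comul (R := F)))

lemma Tmap_apply (f : C ⊗[F] C →ₗ[F] H) (a b : C) {ιa ιb : Type*} (ra : Coalgebra.Repr F a ιa)
    (rb : Coalgebra.Repr F b ιb) :
    Tmap f (a ⊗ₜ[F] b) = ∑ i ∈ ra.index, ∑ j ∈ rb.index,
      f (ra.right i ⊗ₜ[F] rb.left j) ⊗ₜ[F] f (ra.left i ⊗ₜ[F] rb.right j) := by
  simp only [Tmap, LinearMap.comp_apply, TensorProduct.map_tmul]
  rw [← ra.eq, ← rb.eq]
  simp only [TensorProduct.sum_tmul, TensorProduct.tmul_sum, map_sum,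
    TensorProduct.tensorTensorTensorComm_tmul, TensorProduct.comm_tmul,
    LinearMap.rTensor_tmul, LinearEquiv.coe_coe, TensorProduct.map_tmul]
  rw [Finset.sum_comm]

/-- the map `p ⊗ q ⊗ u ⊗ v ↦ f(q ⊗ g₁ u) ⊗ f(p ⊗ g₂ v)`. -/
noncomputable def Phi (f : C ⊗[F] C →ₗ[F] H) (g₁ g₂ : C →ₗ[F] C) :
    C ⊗[F] (C ⊗[F] (C ⊗[F] C)) →ₗ[F] H ⊗[F] H :=
  (TensorProduct.map (f ∘ₗ LinearMap.lTensor C g₁) (f ∘ₗ LinearMap.lTensor C g₂)) ∘ₗ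
    (TensorProduct.tensorTensorTensorComm F C C C C).toLinearMap ∘ₗ
    (LinearMap.rTensor (C ⊗[F] C) (TensorProduct.comm F C C).toLinearMap) ∘ₗ
    (TensorProduct.assoc F C C (C ⊗[F] C)).symm.toLinearMap

lemma Phi_apply (f : C ⊗[F] C →ₗ[F] H) (g₁ g₂ : C →ₗ[F] C) (p q u v : C) :
    Phi f g₁ g₂ (p ⊗ₜ[F] (q ⊗ₜ[F] (u ⊗ₜ[F] v))) =
      f (q ⊗ₜ[F] g₁ u) ⊗ₜ[F] f (p ⊗ₜ[F] g₂ v) := by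
  simp [Phi, TensorProduct.tensorTensorTensorComm_tmul, TensorProduct.comm_tmul,
    TensorProduct.assoc_symm_tmul]

lemma cotr_can (act : C →ₗ[F] H →ₗ[F] C) (inv : C ⊗[F] C →ₗ[F] C ⊗[F] H)
    (hinv₂ : inv ∘ₗ canMap act = LinearMap.id) (c : C) (h : H) :
    cotr inv (canMap act (c ⊗ₜ[F] h)) = counit (R := F) c • h := by
  have h2 := LinearMap.congr_fun hinv₂ (c ⊗ₜ[F] h)
  simp only [LinearMap.comp_apply, LinearMap.id_apply] at h2
  simp [cotr, h2]

lemma canMap_tmul (act : C →ₗ[F] H →ₗ[F] C) (c : C) (h : H) {ιc : Type*} (rc : Coalgebra.Repr F c ιc) :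
    canMap act (c ⊗ₜ[F] h) = ∑ i ∈ rc.index, rc.left i ⊗ₜ[F] act (rc.right i) h := by
  simp only [canMap, LinearMap.comp_apply, LinearMap.rTensor_tmul]
  rw [← rc.eq]
  simp [TensorProduct.sum_tmul, map_sum, TensorProduct.assoc_tmul]

lemma sum_cotr (act : C →ₗ[F] H →ₗ[F] C) (inv : C ⊗[F] C →ₗ[F] C ⊗[F] H)
    (hinv₂ : inv ∘ₗ canMap act = LinearMap.id) (c : C) (h : H) {ιc : Type*} (rc : Coalgebra.Repr F c ιc) :
    ∑ i ∈ rc.index, cotr inv (rc.left i ⊗ₜ[F] act (rc.right i) h)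
      = counit (R := F) c • h := by
  rw [← map_sum, ← canMap_tmul act c h rc, cotr_can act inv hinv₂]

lemma fourfold (c : C) {ι : Type*} {κ Λ : ι → Type*} {μ ν : (i : ι) → Λ i → Type*}
    (rc : Coalgebra.Repr F c ι)
    (rx : (i : rc.ι) → Coalgebra.Repr F (rc.left i) (κ i))
    (ry : (i : rc.ι) → Coalgebra.Repr F (rc.right i) (Λ i))
    (rq : (i : rc.ι) → (j : (ry i).ι) → Coalgebra.Repr F ((ry i).left j) (μ i j))
    (rr : (i : rc.ι) → (j : (ry i).ι) → Coalgebra.Repr F ((ry i).right j) (ν i j)) :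
    ∑ i ∈ rc.index, ∑ l ∈ (rx i).index, ∑ j ∈ (ry i).index,
      (rx i).left l ⊗ₜ[F] ((rx i).right l ⊗ₜ[F] ((ry i).left j ⊗ₜ[F] (ry i).right j))
    = ∑ i ∈ rc.index, ∑ j ∈ (ry i).index, ∑ m ∈ (rq i j).index,
      rc.left i ⊗ₜ[F] ((rq i j).left m ⊗ₜ[F] ((rq i j).right m ⊗ₜ[F] (ry i).right j)) := by
  have key := congrArg (LinearMap.lTensor C (LinearMap.lTensor C (comul (R := F))))
    (Coalgebra.sum_tmul_tmul_eq rc rx ry)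
  simp only [map_sum, LinearMap.lTensor_tmul] at key
  calc
    ∑ i ∈ rc.index, ∑ l ∈ (rx i).index, ∑ j ∈ (ry i).index,
        (rx i).left l ⊗ₜ[F] ((rx i).right l ⊗ₜ[F] ((ry i).left j ⊗ₜ[F] (ry i).right j))
      = ∑ i ∈ rc.index, ∑ l ∈ (rx i).index,
        (rx i).left l ⊗ₜ[F] ((rx i).right l ⊗ₜ[F] comul (R := F) (rc.right i)) := by
        refine Finset.sum_congr rfl fun i _ => Finset.sum_congr rfl fun l _ => ?_
        rw [← (ry i).eq, TensorProduct.tmul_sum, TensorProduct.tmul_sum]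
    _ = ∑ i ∈ rc.index, ∑ j ∈ (ry i).index,
        rc.left i ⊗ₜ[F] ((ry i).left j ⊗ₜ[F] comul (R := F) ((ry i).right j)) := key
    _ = ∑ i ∈ rc.index, ∑ j ∈ (ry i).index, ∑ m ∈ (rr i j).index,
        rc.left i ⊗ₜ[F] ((ry i).left j ⊗ₜ[F] ((rr i j).left m ⊗ₜ[F] (rr i j).right m)) := by
        refine Finset.sum_congr rfl fun i _ => Finset.sum_congr rfl fun j _ => ?_
        rw [← (rr i j).eq, TensorProduct.tmul_sum, TensorProduct.tmul_sum]
    _ = ∑ i ∈ rc.index, ∑ j ∈ (ry i).index, ∑ m ∈ (rq i j).index,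
        rc.left i ⊗ₜ[F] ((rq i j).left m ⊗ₜ[F] ((rq i j).right m ⊗ₜ[F] (ry i).right j)) := by
        refine Finset.sum_congr rfl fun i _ => ?_
        have inner := Coalgebra.sum_tmul_tmul_eq (ry i) (rq i) (rr i)
        calc
          ∑ j ∈ (ry i).index, ∑ m ∈ (rr i j).index,
              rc.left i ⊗ₜ[F] ((ry i).left j ⊗ₜ[F] ((rr i j).left m ⊗ₜ[F] (rr i j).right m))
            = rc.left i ⊗ₜ[F] (∑ j ∈ (ry i).index, ∑ m ∈ (rr i j).index,
              (ry i).left j ⊗ₜ[F] ((rr i j).left m ⊗ₜ[F] (rr i j).right m)) := by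
              rw [TensorProduct.tmul_sum]
              exact Finset.sum_congr rfl fun j _ => by rw [TensorProduct.tmul_sum]
          _ = rc.left i ⊗ₜ[F] (∑ j ∈ (ry i).index, ∑ m ∈ (rq i j).index,
              (rq i j).left m ⊗ₜ[F] ((rq i j).right m ⊗ₜ[F] (ry i).right j)) := by rw [← inner]
          _ = ∑ j ∈ (ry i).index, ∑ m ∈ (rq i j).index,
              rc.left i ⊗ₜ[F] ((rq i j).left m ⊗ₜ[F] ((rq i j).right m ⊗ₜ[F] (ry i).right j)) := by
              rw [TensorProduct.tmul_sum]
              exact Finset.sum_congr rfl fun j _ => by rw [TensorProduct.tmul_sum]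

end aux

section main

set_option linter.unusedSectionVars false

variable {F : Type u} {C : Type v} {H : Type w} [Field F]
    [AddCommGroup C] [Module F C] [Coalgebra F C] [Ring H] [HopfAlgebra F H]

/-- `Repr` of `act c h` built from `hact_comul`. -/
noncomputable def actRepr (act : C →ₗ[F] H →ₗ[F] C)
    (hact_comul : ∀ (c : C) (h : H) (ιc : Type v) (rc : Coalgebra.Repr.{u, v, v} F c ιc)
      (ιh : Type w) (rh : Coalgebra.Repr.{u, w, w} F h ιh),
      comul (R := F) (act c h) = ∑ i ∈ rc.index, ∑ j ∈ rh.index,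
        act (rc.left i) (rh.left j) ⊗ₜ[F] act (rc.right i) (rh.right j))
    (y : C) (h : H) {ιy : Type v} {ιh : Type w} (ry : Coalgebra.Repr.{u, v, v} F y ιy)
    (rh : Coalgebra.Repr.{u, w, w} F h ιh) :
    Coalgebra.Repr F (act y h) (ιy × ιh) where
  index := ry.index ×ˢ rh.index
  left := fun p => act (ry.left p.1) (rh.left p.2)
  right := fun p => act (ry.right p.1) (rh.right p.2)
  eq := by rw [hact_comul y h _ ry _ rh, Finset.sum_product]

lemma counit_collapse (c : C) {ιc : Type*} (rc : Coalgebra.Repr F c ιc) :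
    ∑ i ∈ rc.index, counit (R := F) (rc.left i) • rc.right i = c := by
  calc
    ∑ i ∈ rc.index, counit (R := F) (rc.left i) • rc.right i
      = TensorProduct.lid F C (∑ i ∈ rc.index,
          counit (R := F) (rc.left i) ⊗ₜ[F] rc.right i) := by
        rw [map_sum]
        exact Finset.sum_congr rfl fun i _ => (TensorProduct.lid_tmul _ _).symm
    _ = TensorProduct.lid F C ((1 : F) ⊗ₜ[F] c) := by rw [Coalgebra.sum_counit_tmul_eq rc]
    _ = c := by simp

set_option maxHeartbeats 2000000 in
lemma main_aux (act : C →ₗ[F] H →ₗ[F] C)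
    (hact_comul : ∀ (c : C) (h : H) (ιc : Type v) (rc : Coalgebra.Repr.{u, v, v} F c ιc)
      (ιh : Type w) (rh : Coalgebra.Repr.{u, w, w} F h ιh),
      comul (R := F) (act c h) = ∑ i ∈ rc.index, ∑ j ∈ rh.index,
        act (rc.left i) (rh.left j) ⊗ₜ[F] act (rc.right i) (rh.right j))
    (inv : C ⊗[F] C →ₗ[F] C ⊗[F] H)
    (hinv₂ : inv ∘ₗ canMap act = LinearMap.id) (c : C) (h : H) :
    comul (R := F) (cotr inv (canMap act (c ⊗ₜ[F] h)))
      = Tmap (cotr inv) (canMap act (c ⊗ₜ[F] h)) := by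
  classical
  set τ := cotr inv with hτ
  let rc := ℛ F c
  let rh := ℛ F h
  let rx : (i : rc.ι) → Coalgebra.Repr F (rc.left i) (C × C) := fun i => ℛ F (rc.left i)
  let ry : (i : rc.ι) → Coalgebra.Repr F (rc.right i) (C × C) := fun i => ℛ F (rc.right i)
  let rq : (i : rc.ι) → (j : (ry i).ι) → Coalgebra.Repr F ((ry i).left j) (C × C) :=
    fun i j => ℛ F ((ry i).left j)
  let rr : (i : rc.ι) → (j : (ry i).ι) → Coalgebra.Repr F ((ry i).right j) (C × C) :=
    fun i j => ℛ F ((ry i).right j)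
  -- the summed Φ map
  set Φ : C ⊗[F] (C ⊗[F] (C ⊗[F] C)) →ₗ[F] H ⊗[F] H :=
    ∑ k ∈ rh.index, Phi τ (act.flip (rh.left k)) (act.flip (rh.right k)) with hΦ
  have hΦapp : ∀ p q u v : C, Φ (p ⊗ₜ[F] (q ⊗ₜ[F] (u ⊗ₜ[F] v))) =
      ∑ k ∈ rh.index, τ (q ⊗ₜ[F] act u (rh.left k)) ⊗ₜ[F] τ (p ⊗ₜ[F] act v (rh.right k)) := by
    intro p q u v
    rw [hΦ, LinearMap.sum_apply]
    exact Finset.sum_congr rfl fun k _ => by rw [Phi_apply]; rfl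
  -- LHS
  rw [hτ, cotr_can act inv hinv₂ c h, map_smul, ← hτ]
  -- RHS
  rw [canMap_tmul act c h rc, map_sum]
  symm
  calc
    ∑ i ∈ rc.index, Tmap τ (rc.left i ⊗ₜ[F] act (rc.right i) h)
      = ∑ i ∈ rc.index, ∑ l ∈ (rx i).index, ∑ p ∈ (ry i).index ×ˢ rh.index,
          τ ((rx i).right l ⊗ₜ[F] act ((ry i).left p.1) (rh.left p.2)) ⊗ₜ[F]
          τ ((rx i).left l ⊗ₜ[F] act ((ry i).right p.1) (rh.right p.2)) := by
        exact Finset.sum_congr rfl fun i _ =>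
          Tmap_apply τ _ _ (rx i) (actRepr act hact_comul (rc.right i) h (ry i) rh)
    _ = ∑ i ∈ rc.index, ∑ l ∈ (rx i).index, ∑ j ∈ (ry i).index,
          Φ ((rx i).left l ⊗ₜ[F] ((rx i).right l ⊗ₜ[F] ((ry i).left j ⊗ₜ[F] (ry i).right j))) := by
        refine Finset.sum_congr rfl fun i _ => Finset.sum_congr rfl fun l _ => ?_
        rw [Finset.sum_product]
        exact Finset.sum_congr rfl fun j _ =>
          (hΦapp ((rx i).left l) ((rx i).right l) ((ry i).left j) ((ry i).right j)).symm
    _ = Φ (∑ i ∈ rc.index, ∑ l ∈ (rx i).index, ∑ j ∈ (ry i).index,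
          (rx i).left l ⊗ₜ[F] ((rx i).right l ⊗ₜ[F] ((ry i).left j ⊗ₜ[F] (ry i).right j))) := by
        simp only [map_sum]
    _ = Φ (∑ i ∈ rc.index, ∑ j ∈ (ry i).index, ∑ m ∈ (rq i j).index,
          rc.left i ⊗ₜ[F] ((rq i j).left m ⊗ₜ[F] ((rq i j).right m ⊗ₜ[F] (ry i).right j))) := by
        rw [fourfold c rc rx ry rq rr]
    _ = ∑ i ∈ rc.index, ∑ j ∈ (ry i).index, ∑ m ∈ (rq i j).index, ∑ k ∈ rh.index,
          τ ((rq i j).left m ⊗ₜ[F] act ((rq i j).right m) (rh.left k)) ⊗ₜ[F]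
          τ (rc.left i ⊗ₜ[F] act ((ry i).right j) (rh.right k)) := by
        simp only [map_sum]
        exact Finset.sum_congr rfl fun i _ => Finset.sum_congr rfl fun j _ =>
          Finset.sum_congr rfl fun m _ =>
            hΦapp (rc.left i) ((rq i j).left m) ((rq i j).right m) ((ry i).right j)
    _ = ∑ i ∈ rc.index, ∑ j ∈ (ry i).index, ∑ k ∈ rh.index,
          (counit (R := F) ((ry i).left j) • rh.left k) ⊗ₜ[F]
          τ (rc.left i ⊗ₜ[F] act ((ry i).right j) (rh.right k)) := by
        refine Finset.sum_congr rfl fun i _ => Finset.sum_congr rfl fun j _ => ?_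
        rw [Finset.sum_comm]
        refine Finset.sum_congr rfl fun k _ => ?_
        rw [← TensorProduct.sum_tmul, sum_cotr act inv hinv₂ _ _ (rq i j)]
    _ = ∑ i ∈ rc.index, ∑ k ∈ rh.index,
          rh.left k ⊗ₜ[F] τ (rc.left i ⊗ₜ[F] act (rc.right i) (rh.right k)) := by
        refine Finset.sum_congr rfl fun i _ => ?_
        rw [Finset.sum_comm]
        refine Finset.sum_congr rfl fun k _ => ?_
        have step : ∑ j ∈ (ry i).index,
            (counit (R := F) ((ry i).left j) • rh.left k) ⊗ₜ[F]
              τ (rc.left i ⊗ₜ[F] act ((ry i).right j) (rh.right k))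
            = rh.left k ⊗ₜ[F] (∑ j ∈ (ry i).index, counit (R := F) ((ry i).left j) •
                τ (rc.left i ⊗ₜ[F] act ((ry i).right j) (rh.right k))) := by
          rw [TensorProduct.tmul_sum]
          exact Finset.sum_congr rfl fun j _ => by
            rw [TensorProduct.smul_tmul, TensorProduct.tmul_smul]
        rw [step]
        congr 1
        calc
          ∑ j ∈ (ry i).index, counit (R := F) ((ry i).left j) •
              τ (rc.left i ⊗ₜ[F] act ((ry i).right j) (rh.right k))
            = τ (rc.left i ⊗ₜ[F] act (∑ j ∈ (ry i).index,
                counit (R := F) ((ry i).left j) • (ry i).right j) (rh.right k)) := by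
              rw [map_sum, LinearMap.sum_apply, TensorProduct.tmul_sum, map_sum]
              exact Finset.sum_congr rfl fun j _ => by
                rw [map_smul, LinearMap.smul_apply, TensorProduct.tmul_smul, map_smul]
          _ = τ (rc.left i ⊗ₜ[F] act (rc.right i) (rh.right k)) := by
              rw [counit_collapse _ (ry i)]
    _ = ∑ k ∈ rh.index, rh.left k ⊗ₜ[F] (counit (R := F) c • rh.right k) := by
        rw [Finset.sum_comm]
        refine Finset.sum_congr rfl fun k _ => ?_
        rw [← TensorProduct.tmul_sum, sum_cotr act inv hinv₂ _ _ rc]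
    _ = counit (R := F) c • comul (R := F) h := by
        rw [← rh.eq, Finset.smul_sum]
        exact Finset.sum_congr rfl fun k _ => by rw [TensorProduct.tmul_smul]

end main

/-- The cotranslation map is "anti-comultiplicative":
`Δ(τ(a⊗b)) = Σ τ(a₂⊗b₁) ⊗ τ(a₁⊗b₂)`. -/
theorem cotr_comul {F : Type u} {C : Type v} {H : Type w} [Field F]
    [AddCommGroup C] [Module F C] [Coalgebra F C] [Ring H] [HopfAlgebra F H]
    (act : C →ₗ[F] H →ₗ[F] C)
    (hact_one : ∀ c : C, act c 1 = c)
    (hact_mul : ∀ (c : C) (h k : H), act (act c h) k = act c (h * k))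
    (hact_comul : ∀ (c : C) (h : H) (ιc : Type v) (rc : Coalgebra.Repr.{u, v, v} F c ιc)
      (ιh : Type w) (rh : Coalgebra.Repr.{u, w, w} F h ιh),
      comul (R := F) (act c h) = ∑ i ∈ rc.index, ∑ j ∈ rh.index,
        act (rc.left i) (rh.left j) ⊗ₜ[F] act (rc.right i) (rh.right j))
    (hact_counit : ∀ (c : C) (h : H),
      counit (R := F) (act c h) = counit (R := F) c * counit (R := F) h)
    (hker : LinearMap.ker (counit (R := F) : C →ₗ[F] F) =
      Submodule.span F {x : C | ∃ (c : C) (h : H), x = act c h - counit (R := F) h • c})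
    (inv : C ⊗[F] C →ₗ[F] C ⊗[F] H)
    (hinv₁ : canMap act ∘ₗ inv = LinearMap.id)
    (hinv₂ : inv ∘ₗ canMap act = LinearMap.id)
    :
    ∀ (a b : C) (ιa : Type v) (ra : Coalgebra.Repr.{u, v, v} F a ιa) (ιb : Type v)
      (rb : Coalgebra.Repr.{u, v, v} F b ιb),
      comul (R := F) (cotr inv (a ⊗ₜ[F] b)) =
        ∑ i ∈ ra.index, ∑ j ∈ rb.index,
          cotr inv (ra.right i ⊗ₜ[F] rb.left j) ⊗ₜ[F] cotr inv (ra.left i ⊗ₜ[F] rb.right j) := by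
  intro a b ιa ra ιb rb
  have hab : canMap act (inv (a ⊗ₜ[F] b)) = a ⊗ₜ[F] b := by
    have := LinearMap.congr_fun hinv₁ (a ⊗ₜ[F] b)
    simpa using this
  have hz : ∀ z : C ⊗[F] H, comul (R := F) (cotr inv (canMap act z))
      = Tmap (cotr inv) (canMap act z) := by
    intro z
    induction z using TensorProduct.induction_on with
    | zero => simp
    | tmul c h => exact main_aux act hact_comul inv hinv₂ c h
    | add x y hx hy => simp only [map_add, hx, hy]
  calc
    comul (R := F) (cotr inv (a ⊗ₜ[F] b))
      = comul (R := F) (cotr inv (canMap act (inv (a ⊗ₜ[F] b)))) := by rw [hab]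
    _ = Tmap (cotr inv) (canMap act (inv (a ⊗ₜ[F] b))) := hz _
    _ = Tmap (cotr inv) (a ⊗ₜ[F] b) := by rw [hab]
    _ = ∑ i ∈ ra.index, ∑ j ∈ rb.index,
          cotr inv (ra.right i ⊗ₜ[F] rb.left j) ⊗ₜ[F] cotr inv (ra.left i ⊗ₜ[F] rb.right j) :=
        Tmap_apply (cotr inv) a b ra rb
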